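/- arXiv:2401.13208 — 3 statements merged into one kernel-verified Lean document; each statement's English description precedes it below -/
import Mathlib

section
/- For an arbitrary finite sequence of events A_1,...,A_p on a probability space, there exists an exchangeable sequence of events B_1,...,B_p (on a possibly different probability space) such that the number of occurrences ∑_{j=1}^p 1(A_j) and ∑_{j=1}^p 1(B_j) have the same distribution. -/
open MeasureTheory

/-- Galambos (1973): for arbitrary events A_1,...,A_p there exist exchangeable
events B_1,...,B_p (on a possibly different probability space) such that the
numbers of occurrences have the same distribution. -/
theorem exists_exchangeable_events_same_count {Ω : Type*} [MeasurableSpace Ω]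
    (P : Measure Ω) [IsProbabilityMeasure P] {p : ℕ}
    (A : Fin p → Set Ω) (hA : ∀ j, MeasurableSet (A j)) :
    ∃ (Ω' : Type) (_ : MeasurableSpace Ω') (P' : Measure Ω')
      (_ : IsProbabilityMeasure P') (B : Fin p → Set Ω'),
      (∀ j, MeasurableSet (B j)) ∧
      (∀ s t : Finset (Fin p), s.card = t.card →
        P' (⋂ i ∈ s, B i) = P' (⋂ i ∈ t, B i)) ∧
      Measure.map (fun ω => ∑ j : Fin p, Set.indicator (A j) (fun _ => (1 : ℕ)) ω) P
        = Measure.map (fun ω => ∑ j : Fin p, Set.indicator (B j) (fun _ => (1 : ℕ)) ω) P' := by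
  classical
  letI : MeasurableSpace (Finset (Fin p)) := ⊤
  set G := Equiv.Perm (Fin p) with hG
  -- the "random subset" map for each permutation σ
  set F : G → Ω → Finset (Fin p) :=
    fun σ ω => Finset.univ.filter (fun j => ω ∈ A (σ j)) with hF
  have hFmeas : ∀ σ : G, Measurable (F σ) := by
    intro σ
    apply measurable_to_countable'
    intro s
    have : F σ ⁻¹' {s} = ⋂ j : Fin p, (if j ∈ s then A (σ j) else (A (σ j))ᶜ) := by
      ext ω
      simp only [Set.mem_preimage, Set.mem_singleton_iff, Set.mem_iInter, hF,
        Finset.ext_iff, Finset.mem_filter, Finset.mem_univ, true_and]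
      constructor
      · intro h j
        by_cases hj : j ∈ s <;> simp only [hj, if_true, if_false]
        · exact (h j).2 hj
        · exact fun hc => hj ((h j).1 hc)
      · intro h j
        have := h j
        by_cases hj : j ∈ s <;> simp_all
    rw [this]
    refine MeasurableSet.iInter fun j => ?_
    by_cases hj : j ∈ s <;> simp only [hj, if_true, if_false]
    · exact hA (σ j)
    · exact (hA (σ j)).compl
  set c : ENNReal := (Fintype.card G : ENNReal)⁻¹ with hc
  set P' : Measure (Finset (Fin p)) := c • ∑ σ : G, Measure.map (F σ) P with hP'
  have hcard_ne : (Fintype.card G : ENNReal) ≠ 0 := by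
    simp [Fintype.card_ne_zero]
  have hP'apply : ∀ S : Set (Finset (Fin p)),
      P' S = c * ∑ σ : G, P (F σ ⁻¹' S) := by
    intro S
    rw [hP', Measure.smul_apply, Measure.finset_sum_apply, smul_eq_mul]
    congr 1
    refine Finset.sum_congr rfl fun σ _ => ?_
    exact Measure.map_apply (hFmeas σ) (by trivial)
  have hprob : IsProbabilityMeasure P' := by
    constructor
    rw [hP'apply]
    simp [measure_univ, hc, ENNReal.inv_mul_cancel hcard_ne (by simp)]
  refine ⟨Finset (Fin p), ⊤, P', hprob, fun i => {s | i ∈ s}, fun j => trivial, ?_, ?_⟩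
  · -- exchangeability
    intro s t hst
    have hBint : ∀ u : Finset (Fin p), ∀ σ : G,
        F σ ⁻¹' (⋂ i ∈ u, {s : Finset (Fin p) | i ∈ s}) = ⋂ i ∈ u, A (σ i) := by
      intro u σ
      ext ω
      simp [hF, Set.mem_iInter]
    rw [hP'apply, hP'apply]
    congr 1
    -- a permutation τ carrying t onto s
    have hmain : Fintype.card {x : Fin p // x ∈ t} = Fintype.card {x : Fin p // x ∈ s} := by
      simp [Fintype.card_subtype, Finset.filter_mem_eq_inter, hst]
    have hcompl : Fintype.card {x : Fin p // x ∉ t} = Fintype.card {x : Fin p // x ∉ s} := by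
      simp only [Fintype.card_subtype_compl, hmain]
    let e : {x : Fin p // x ∈ t} ≃ {x : Fin p // x ∈ s} := Fintype.equivOfCardEq hmain
    let e' : {x : Fin p // x ∉ t} ≃ {x : Fin p // x ∉ s} := Fintype.equivOfCardEq hcompl
    let τ : Equiv.Perm (Fin p) := Equiv.subtypeCongr e e'
    have hτ : ∀ i : Fin p, τ i ∈ s ↔ i ∈ t := by
      intro i
      by_cases hi : i ∈ t
      · have hτi : τ i = (e ⟨i, hi⟩ : Fin p) := by
          simp [τ, Equiv.subtypeCongr, Equiv.sumCompl_symm_apply_of_pos hi]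
        rw [hτi]
        exact iff_of_true (e ⟨i, hi⟩).2 hi
      · have hτi : τ i = (e' ⟨i, hi⟩ : Fin p) := by
          simp [τ, Equiv.subtypeCongr, Equiv.sumCompl_symm_apply_of_neg hi]
        rw [hτi]
        exact iff_of_false (e' ⟨i, hi⟩).2 hi
    have key : ∀ σ : G, ⋂ i ∈ t, A ((σ * τ) i) = ⋂ i ∈ s, A (σ i) := by
      intro σ
      ext x
      simp only [Set.mem_iInter, Equiv.Perm.mul_apply]
      constructor
      · intro h i hi
        have h1 : τ (τ.symm i) = i := τ.apply_symm_apply i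
        have h2 : τ.symm i ∈ t := by rw [← hτ, h1]; exact hi
        have h3 := h (τ.symm i) h2
        rw [Equiv.Perm.mul_apply, h1] at h3
        exact h3
      · intro h i hi
        exact h (τ i) ((hτ i).2 hi)
    calc ∑ σ : G, P (F σ ⁻¹' ⋂ i ∈ s, {s : Finset (Fin p) | i ∈ s})
        = ∑ σ : G, P (⋂ i ∈ s, A (σ i)) := by
          refine Finset.sum_congr rfl fun σ _ => by rw [hBint]
      _ = ∑ σ : G, P (⋂ i ∈ t, A ((σ * τ) i)) := by
          refine Finset.sum_congr rfl fun σ _ => by rw [key σ]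
      _ = ∑ σ : G, P (⋂ i ∈ t, A (σ i)) :=
          Fintype.sum_equiv (Equiv.mulRight τ) _ _ (fun σ => rfl)
      _ = ∑ σ : G, P (F σ ⁻¹' ⋂ i ∈ t, {s : Finset (Fin p) | i ∈ s}) := by
          refine Finset.sum_congr rfl fun σ _ => by rw [hBint]
  · -- equality of distributions of the counts
    have hcntB : ∀ u : Finset (Fin p),
        (∑ j : Fin p, Set.indicator {s : Finset (Fin p) | j ∈ s} (fun _ => (1 : ℕ)) u)
          = u.card := by
      intro u
      rw [Finset.card_eq_sum_ones]
      rw [← Finset.sum_filter_add_sum_filter_not Finset.univ (· ∈ u)]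
      have h1 : ∀ j ∈ Finset.univ.filter (· ∈ u),
          Set.indicator {s : Finset (Fin p) | j ∈ s} (fun _ => (1 : ℕ)) u = 1 := by
        intro j hj
        simp only [Finset.mem_filter] at hj
        simp [Set.indicator_of_mem, hj.2]
      have h2 : ∀ j ∈ Finset.univ.filter (¬ · ∈ u),
          Set.indicator {s : Finset (Fin p) | j ∈ s} (fun _ => (1 : ℕ)) u = 0 := by
        intro j hj
        simp only [Finset.mem_filter] at hj
        simp [Set.indicator_of_notMem, hj.2]
      rw [Finset.sum_congr rfl h1, Finset.sum_congr rfl h2]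
      simp [Finset.filter_mem_eq_inter]
    have hcntA : ∀ σ : G, ∀ ω : Ω,
        (F σ ω).card = ∑ j : Fin p, Set.indicator (A j) (fun _ => (1 : ℕ)) ω := by
      intro σ ω
      rw [hF]
      rw [Finset.card_filter]
      rw [← Equiv.sum_comp σ (fun j => Set.indicator (A j) (fun _ => (1 : ℕ)) ω)]
      refine Finset.sum_congr rfl fun j _ => ?_
      by_cases hj : ω ∈ A (σ j) <;> simp [hj, Set.indicator_of_mem, Set.indicator_of_notMem]
    have hmeasA : Measurable fun ω => ∑ j : Fin p, Set.indicator (A j) (fun _ => (1 : ℕ)) ω := by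
      apply Finset.measurable_sum
      intro j _
      exact (measurable_const.indicator (hA j))
    have hmeasB : Measurable fun u : Finset (Fin p) =>
        ∑ j : Fin p, Set.indicator {s : Finset (Fin p) | j ∈ s} (fun _ => (1 : ℕ)) u :=
      fun _ _ => trivial
    ext E hE
    rw [Measure.map_apply hmeasA hE, Measure.map_apply hmeasB hE, hP'apply]
    have : ∀ σ : G,
        P (F σ ⁻¹' ((fun u : Finset (Fin p) =>
          ∑ j : Fin p, Set.indicator {s : Finset (Fin p) | j ∈ s} (fun _ => (1 : ℕ)) u) ⁻¹' E))
        = P ((fun ω => ∑ j : Fin p, Set.indicator (A j) (fun _ => (1 : ℕ)) ω) ⁻¹' E) := by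
      intro σ
      congr 1
      ext ω
      simp only [Set.mem_preimage]
      rw [hcntB (F σ ω), hcntA σ ω]
    rw [Finset.sum_congr rfl fun σ _ => this σ]
    rw [Finset.sum_const, Finset.card_univ, nsmul_eq_mul, ← mul_assoc,
      ENNReal.inv_mul_cancel hcard_ne (by simp), one_mul]
end

section
/- Under the Benjamini–Hochberg procedure applied to m independent p-values of which m_0 correspond to true nulls with uniform p-values, the false discovery rate E[V/max(R,1)] equals (m_0/m)·α_0, and in particular is at most α_0. -/
open MeasureTheory

open Classical in
/-- The number of rejections of the Benjamini–Hochberg procedure at level `α0`: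
the largest `i ≤ m` such that at least `i` of the p-values are `≤ i·α0/m`. -/
noncomputable def bhCount (α0 : ℝ) {m : ℕ} (pv : Fin m → ℝ) : ℕ :=
  Nat.findGreatest
    (fun i => i ≤ (Finset.univ.filter (fun k => pv k ≤ (i : ℝ) * α0 / m)).card) m

open Classical in
/-- The rejection set of the Benjamini–Hochberg procedure at level `α0`. -/
noncomputable def bhReject (α0 : ℝ) {m : ℕ} (pv : Fin m → ℝ) : Finset (Fin m) :=
  Finset.univ.filter (fun k => pv k ≤ (bhCount α0 pv : ℝ) * α0 / m)

namespace BHaux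

open Finset Classical

variable {α0 : ℝ} {m : ℕ} {pv : Fin m → ℝ}

/-- the count of p-values below threshold `i·α0/m` -/
noncomputable def cnt (α0 : ℝ) {m : ℕ} (pv : Fin m → ℝ) (i : ℕ) : ℕ :=
  (Finset.univ.filter (fun k => pv k ≤ (i : ℝ) * α0 / m)).card

lemma bhCount_def (α0 : ℝ) (pv : Fin m → ℝ) :
    bhCount α0 pv = Nat.findGreatest (fun i => i ≤ cnt α0 pv i) m := rfl

lemma thresh_nonneg (hα : 0 ≤ α0) (i : ℕ) : (0:ℝ) ≤ (i : ℝ) * α0 / m := by positivity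

lemma cnt_mono (hα : 0 ≤ α0) {i j : ℕ} (hij : i ≤ j) : cnt α0 pv i ≤ cnt α0 pv j := by
  apply card_le_card
  intro k hk
  simp only [mem_filter, mem_univ, true_and] at hk ⊢
  refine le_trans hk ?_
  gcongr

lemma cnt_le (i : ℕ) : cnt α0 pv i ≤ m := by
  simpa [cnt] using (card_filter_le Finset.univ (fun k => pv k ≤ (i : ℝ) * α0 / m))

lemma bhCount_le : bhCount α0 pv ≤ m := Nat.findGreatest_le m

lemma le_cnt_bhCount : bhCount α0 pv ≤ cnt α0 pv (bhCount α0 pv) := by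
  rw [bhCount_def]
  exact Nat.findGreatest_spec (P := fun i => i ≤ cnt α0 pv i) (Nat.zero_le m) (Nat.zero_le _)

lemma cnt_bhCount_le (hα : 0 ≤ α0) : cnt α0 pv (bhCount α0 pv) ≤ bhCount α0 pv := by
  by_contra h
  push_neg at h
  set R := bhCount α0 pv with hR
  set c := cnt α0 pv R with hc
  have hcm : c ≤ m := cnt_le _
  have hPc : c ≤ cnt α0 pv c := le_trans le_rfl (hc ▸ cnt_mono hα h.le)
  have : c ≤ R := by
    rw [hR, bhCount_def]
    exact Nat.le_findGreatest hcm hPc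
  omega

lemma cnt_bhCount (hα : 0 ≤ α0) : cnt α0 pv (bhCount α0 pv) = bhCount α0 pv :=
  le_antisymm (cnt_bhCount_le hα) le_cnt_bhCount

lemma card_bhReject (hα : 0 ≤ α0) : (bhReject α0 pv).card = bhCount α0 pv :=
  cnt_bhCount (pv := pv) hα

lemma mem_bhReject {k : Fin m} :
    k ∈ bhReject α0 pv ↔ pv k ≤ (bhCount α0 pv : ℝ) * α0 / m := by
  simp [bhReject]

lemma cnt_lt_of_bhCount_lt {i : ℕ} (hi : bhCount α0 pv < i) (him : i ≤ m) :
    cnt α0 pv i < i := by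
  have := Nat.findGreatest_is_greatest (P := fun i => i ≤ cnt α0 pv i) hi him
  omega

lemma cnt_update_eq {k : Fin m} (hα : 0 ≤ α0) {i : ℕ} (h : pv k ≤ (i : ℝ) * α0 / m) :
    cnt α0 (Function.update pv k 0) i = cnt α0 pv i := by
  unfold cnt
  congr 1
  apply filter_congr
  intro j _
  rcases eq_or_ne j k with rfl | hj
  · simp [Function.update_self, h, thresh_nonneg hα i]
  · simp [Function.update_of_ne hj]

/-- Leave-one-out: if `pv k ≤ r·α0/m` then setting `pv k` to `0` does not change
whether the BH count equals `r`. -/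
lemma bhCount_update_iff {k : Fin m} (hα : 0 ≤ α0) {r : ℕ}
    (hpk : pv k ≤ (r : ℝ) * α0 / m) :
    bhCount α0 pv = r ↔ bhCount α0 (Function.update pv k 0) = r := by
  have hcnt : ∀ i, r ≤ i → cnt α0 (Function.update pv k 0) i = cnt α0 pv i := by
    intro i hi
    refine cnt_update_eq hα (le_trans hpk ?_)
    gcongr
  constructor
  · rintro rfl
    have hle : bhCount α0 pv ≤ bhCount α0 (Function.update pv k 0) := by
      conv_rhs => rw [bhCount_def]
      refine Nat.le_findGreatest bhCount_le ?_
      rw [hcnt _ le_rfl]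
      exact le_cnt_bhCount
    have hge : bhCount α0 (Function.update pv k 0) ≤ bhCount α0 pv := by
      by_contra h
      push_neg at h
      have h1 : bhCount α0 (Function.update pv k 0) ≤
          cnt α0 (Function.update pv k 0) (bhCount α0 (Function.update pv k 0)) :=
        le_cnt_bhCount
      rw [hcnt _ h.le] at h1
      have h2 := cnt_lt_of_bhCount_lt h (bhCount_le (pv := Function.update pv k 0))
      omega
    exact le_antisymm hge hle
  · rintro h
    subst h
    have hle : bhCount α0 (Function.update pv k 0) ≤ bhCount α0 pv := by
      conv_rhs => rw [bhCount_def]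
      refine Nat.le_findGreatest bhCount_le ?_
      rw [← hcnt _ le_rfl]
      exact le_cnt_bhCount
    have hge : bhCount α0 pv ≤ bhCount α0 (Function.update pv k 0) := by
      by_contra h
      push_neg at h
      have h1 : bhCount α0 pv ≤ cnt α0 pv (bhCount α0 pv) := le_cnt_bhCount
      have h2 := cnt_lt_of_bhCount_lt h (bhCount_le (pv := pv))
      rw [hcnt _ h.le] at h2
      omega
    omega

lemma one_le_bhCount_update {k : Fin m} (hα : 0 ≤ α0) (hm : 0 < m) :
    1 ≤ bhCount α0 (Function.update pv k 0) := by
  rw [bhCount_def]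
  refine Nat.le_findGreatest hm ?_
  have : k ∈ Finset.univ.filter
      (fun j => Function.update pv k 0 j ≤ ((1:ℕ) : ℝ) * α0 / m) := by
    simp [Function.update_self]
    calc (0:ℝ) ≤ ((1:ℕ):ℝ) * α0 / m := thresh_nonneg hα 1
    _ = _ := by norm_num
  calc 1 ≤ ({k} : Finset (Fin m)).card := by simp
  _ ≤ _ := card_le_card (by simpa using this)

end BHaux

namespace BHaux

open Finset Classical

variable {α0 : ℝ} {m : ℕ}

lemma measurable_cnt (α0 : ℝ) (i : ℕ) :
    Measurable (fun pv : Fin m → ℝ => cnt α0 pv i) := by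
  have h : (fun pv : Fin m → ℝ => cnt α0 pv i)
      = fun pv => ∑ k : Fin m, if pv k ≤ (i : ℝ) * α0 / m then 1 else 0 := by
    funext pv
    rw [cnt, Finset.card_filter]
  rw [h]
  refine Finset.measurable_sum _ (fun k _ => ?_)
  refine Measurable.ite ?_ measurable_const measurable_const
  exact measurableSet_le (measurable_pi_apply k) measurable_const

lemma measurable_bhCount (α0 : ℝ) :
    Measurable (fun pv : Fin m → ℝ => bhCount α0 pv) := by
  have key : ∀ n : ℕ, Measurable (fun pv : Fin m → ℝ =>
      Nat.findGreatest (fun i => i ≤ cnt α0 pv i) n) := by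
    intro n
    induction n with
    | zero => simpa using measurable_const
    | succ n ih =>
      have h : (fun pv : Fin m → ℝ =>
          Nat.findGreatest (fun i => i ≤ cnt α0 pv i) (n + 1))
          = fun pv => if n + 1 ≤ cnt α0 pv (n + 1) then n + 1
              else Nat.findGreatest (fun i => i ≤ cnt α0 pv i) n := by
        funext pv
        rw [Nat.findGreatest_succ]
      rw [h]
      refine Measurable.ite ?_ measurable_const ih
      exact (measurable_cnt α0 (n + 1)) (MeasurableSet.of_discrete)
  have h2 : (fun pv : Fin m → ℝ => bhCount α0 pv)
      = fun pv => Nat.findGreatest (fun i => i ≤ cnt α0 pv i) m := by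
    funext pv; exact bhCount_def α0 pv
  rw [h2]
  exact key m

lemma pointwise (hα : 0 ≤ α0) (N₀ : Finset (Fin m)) (pv : Fin m → ℝ) :
    ((bhReject α0 pv ∩ N₀).card : ℝ) / max ((bhReject α0 pv).card : ℝ) 1
    = ∑ k ∈ N₀, ∑ r ∈ Finset.Icc 1 m,
        if pv k ≤ (r : ℝ) * α0 / m ∧ bhCount α0 (Function.update pv k 0) = r
        then (r : ℝ)⁻¹ else 0 := by
  classical
  have hcard : (bhReject α0 pv).card = bhCount α0 pv := card_bhReject hα
  have hinter : (bhReject α0 pv ∩ N₀) = N₀.filter (fun k => k ∈ bhReject α0 pv) := by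
    rw [Finset.filter_mem_eq_inter, Finset.inter_comm]
  rw [hinter, Finset.card_filter]
  push_cast
  rw [Finset.sum_div]
  refine Finset.sum_congr rfl (fun k hk => ?_)
  by_cases hR : bhCount α0 pv = 0
  · have hrejempty : bhReject α0 pv = ∅ := Finset.card_eq_zero.mp (by rw [hcard, hR])
    rw [hrejempty]
    simp only [Finset.notMem_empty, if_false, zero_div]
    symm
    refine Finset.sum_eq_zero (fun r hr => ?_)
    rw [if_neg]
    rintro ⟨h1, h2⟩
    have h3 : bhCount α0 pv = r := (bhCount_update_iff hα h1).mpr h2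
    rw [Finset.mem_Icc] at hr
    omega
  · have hR1 : 1 ≤ bhCount α0 pv := Nat.one_le_iff_ne_zero.mpr hR
    have hRm : bhCount α0 pv ≤ m := bhCount_le
    have hmax : max ((bhReject α0 pv).card : ℝ) 1 = (bhCount α0 pv : ℝ) := by
      rw [hcard]
      exact max_eq_left (by exact_mod_cast hR1)
    rw [hmax, Finset.sum_eq_single_of_mem (bhCount α0 pv)
      (Finset.mem_Icc.mpr ⟨hR1, hRm⟩)]
    · have hmemiff : (k ∈ bhReject α0 pv) ↔ pv k ≤ (bhCount α0 pv : ℝ) * α0 / m :=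
        mem_bhReject
      by_cases hc : pv k ≤ (bhCount α0 pv : ℝ) * α0 / m
      · rw [if_pos (hmemiff.mpr hc),
          if_pos ⟨hc, (bhCount_update_iff hα hc).mp rfl⟩, one_div]
      · rw [if_neg (fun h => hc (hmemiff.mp h)), if_neg (fun h => hc h.1), zero_div]
    · intro r hr hne
      rw [if_neg]
      rintro ⟨h1, h2⟩
      exact hne ((bhCount_update_iff hα h1).mpr h2).symm


end BHaux

namespace BHaux

open ProbabilityTheory

lemma indep_update {Ω : Type*} [MeasurableSpace Ω] (P : Measure Ω) {m : ℕ}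
    (pv : Fin m → Ω → ℝ) (hmeas : ∀ k, Measurable (pv k))
    (hindep : ProbabilityTheory.iIndepFun pv P)
    (α0 : ℝ) (k : Fin m) :
    ProbabilityTheory.IndepFun (pv k)
      (fun ω => bhCount α0 (Function.update (fun j => pv j ω) k 0)) P := by
  classical
  have hdisj : Disjoint ({k} : Finset (Fin m)) ({k}ᶜ) := by
    simp [Finset.disjoint_left]
  have base := hindep.indepFun_finset {k} {k}ᶜ hdisj hmeas
  set φ : (({k} : Finset (Fin m)) → ℝ) → ℝ :=
    fun x => x ⟨k, Finset.mem_singleton_self k⟩ with hφ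
  set ψ : ((({k}ᶜ : Finset (Fin m))) → ℝ) → ℕ := fun x =>
    bhCount α0 (fun j => if h : j = k then 0 else
      x ⟨j, by simp [Finset.mem_compl, h]⟩) with hψ
  have hφm : Measurable φ := measurable_pi_apply _
  have hψm : Measurable ψ := by
    apply (measurable_bhCount α0).comp
    apply measurable_pi_lambda
    intro j
    by_cases h : j = k
    · simp only [h, dif_pos]
      exact measurable_const
    · simp only [dif_neg h]
      exact measurable_pi_apply _
  have hcomp := base.comp hφm hψm
  have h1 : (φ ∘ fun a (i : ({k} : Finset (Fin m))) => pv i a) = pv k := rfl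
  have h2 : (ψ ∘ fun a (i : (({k}ᶜ : Finset (Fin m)))) => pv i a)
      = fun ω => bhCount α0 (Function.update (fun j => pv j ω) k 0) := by
    funext ω
    simp only [Function.comp, hψ]
    congr 1
    funext j
    by_cases h : j = k
    · subst h; simp [Function.update_self]
    · simp [Function.update_of_ne h, h]
  rw [h1, h2] at hcomp
  exact hcomp

end BHaux


/-- For m independent p-values of which the true nulls are uniform, the FDR of
the Benjamini–Hochberg procedure at level `α0` equals `(m₀/m)·α0`, and in
particular is at most `α0`. -/
theorem bh_fdr_exact {Ω : Type*} [MeasurableSpace Ω] (P : Measure Ω)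
    [IsProbabilityMeasure P] {m : ℕ} (hm : 0 < m)
    (pv : Fin m → Ω → ℝ) (hmeas : ∀ k, Measurable (pv k))
    (hindep : ProbabilityTheory.iIndepFun pv P)
    (N₀ : Finset (Fin m))
    (hnull : ∀ k ∈ N₀, ∀ t ∈ Set.Icc (0 : ℝ) 1, (P {ω | pv k ω ≤ t}).toReal = t)
    (α0 : ℝ) (hα0 : 0 < α0) (hα1 : α0 ≤ 1) :
    (∫ ω, ((bhReject α0 (fun k => pv k ω) ∩ N₀).card : ℝ)
        / max ((bhReject α0 (fun k => pv k ω)).card : ℝ) 1 ∂P)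
      = ((N₀.card : ℝ) / m) * α0 ∧
    (∫ ω, ((bhReject α0 (fun k => pv k ω) ∩ N₀).card : ℝ)
        / max ((bhReject α0 (fun k => pv k ω)).card : ℝ) 1 ∂P) ≤ α0 := by
  classical
  set t : ℕ → ℝ := fun r => (r : ℝ) * α0 / m with ht
  set g : Fin m → Ω → ℕ :=
    fun k ω => bhCount α0 (Function.update (fun j => pv j ω) k 0) with hg
  have hmeasg : ∀ k, Measurable (g k) := by
    intro k
    apply (BHaux.measurable_bhCount α0).comp
    apply measurable_pi_lambda
    intro j
    by_cases h : j = k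
    · subst h
      simpa [Function.update_self] using (measurable_const : Measurable (fun _ : Ω => (0:ℝ)))
    · simpa [Function.update_of_ne h] using hmeas j
  -- pointwise identity
  have hpt : ∀ ω : Ω,
      ((bhReject α0 (fun k => pv k ω) ∩ N₀).card : ℝ)
        / max ((bhReject α0 (fun k => pv k ω)).card : ℝ) 1
      = ∑ k ∈ N₀, ∑ r ∈ Finset.Icc 1 m,
          if pv k ω ≤ t r ∧ g k ω = r then (r : ℝ)⁻¹ else 0 := by
    intro ω
    simpa using BHaux.pointwise hα0.le N₀ (fun j => pv j ω)
  -- key integral computation per (k, r)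
  have hmeasS : ∀ (k : Fin m) (r : ℕ),
      MeasurableSet ((pv k ⁻¹' Set.Iic (t r)) ∩ (g k ⁻¹' {r})) :=
    fun k r => ((hmeas k) measurableSet_Iic).inter
      ((hmeasg k) (MeasurableSet.of_discrete))
  have hfun : ∀ (k : Fin m) (r : ℕ),
      (fun ω => if pv k ω ≤ t r ∧ g k ω = r then (r : ℝ)⁻¹ else 0)
      = Set.indicator ((pv k ⁻¹' Set.Iic (t r)) ∩ (g k ⁻¹' {r}))
          (fun _ => (r : ℝ)⁻¹) := by
    intro k r
    funext ω
    simp [Set.indicator_apply, Set.mem_inter_iff, Set.mem_preimage, Set.mem_Iic]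
  have hint : ∀ (k : Fin m) (r : ℕ),
      Integrable (fun ω => if pv k ω ≤ t r ∧ g k ω = r then (r : ℝ)⁻¹ else 0) P := by
    intro k r
    rw [hfun]
    exact (integrable_const _).indicator (hmeasS k r)
  have key : ∀ k ∈ N₀, ∀ r ∈ Finset.Icc 1 m,
      (∫ ω, (if pv k ω ≤ t r ∧ g k ω = r then (r : ℝ)⁻¹ else 0) ∂P)
        = (α0 / m) * (P ((g k) ⁻¹' {r})).toReal := by
    intro k hk r hr
    rw [Finset.mem_Icc] at hr
    rw [hfun, integral_indicator_const _ (hmeasS k r)]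
    have hind := (BHaux.indep_update P pv hmeas hindep α0 k).measure_inter_preimage_eq_mul
      (Set.Iic (t r)) {r} measurableSet_Iic MeasurableSet.of_discrete
    have hpre : pv k ⁻¹' Set.Iic (t r) = {ω | pv k ω ≤ t r} := rfl
    have htr0 : 0 ≤ t r := BHaux.thresh_nonneg hα0.le r
    have htr1 : t r ≤ 1 := by
      have h1 : (r : ℝ) * α0 / m ≤ (m : ℝ) * α0 / m := by
        gcongr
        exact_mod_cast hr.2
      have h2 : (m : ℝ) * α0 / m = α0 := by
        field_simp
      calc t r ≤ (m : ℝ) * α0 / m := h1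
        _ = α0 := h2
        _ ≤ 1 := hα1
    have hP1 : (P (pv k ⁻¹' Set.Iic (t r))).toReal = t r := by
      rw [hpre]
      exact hnull k hk (t r) ⟨htr0, htr1⟩
    rw [measureReal_def, hind, ENNReal.toReal_mul, hP1, smul_eq_mul]
    have hr0 : (r : ℝ) ≠ 0 := Nat.cast_ne_zero.mpr (by omega)
    rw [ht]
    have hm0 : (m : ℝ) ≠ 0 := Nat.cast_ne_zero.mpr hm.ne'
    field_simp
    ring
  -- sum over r of the probabilities is 1
  have sum_r : ∀ k : Fin m,
      ∑ r ∈ Finset.Icc 1 m, (P ((g k) ⁻¹' {r})).toReal = 1 := by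
    intro k
    rw [← ENNReal.toReal_sum (fun r _ => measure_ne_top P _)]
    rw [← measure_biUnion_finset ?hd (fun r _ => (hmeasg k) (MeasurableSet.of_discrete))]
    case hd =>
      intro r _ r' _ hne
      apply Set.disjoint_left.mpr
      intro ω h1 h2
      exact hne (by simp only [Set.mem_preimage, Set.mem_singleton_iff] at h1 h2; omega)
    have huniv : (⋃ r ∈ Finset.Icc 1 m, (g k) ⁻¹' {r}) = Set.univ := by
      ext ω
      simp only [Set.mem_iUnion, Set.mem_preimage, Set.mem_singleton_iff,
        Finset.mem_Icc, Set.mem_univ, iff_true]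
      exact ⟨g k ω, ⟨BHaux.one_le_bhCount_update hα0.le hm, BHaux.bhCount_le⟩, rfl⟩
    rw [huniv, measure_univ, ENNReal.toReal_one]
  -- assemble
  have hintegral :
      (∫ ω, ((bhReject α0 (fun k => pv k ω) ∩ N₀).card : ℝ)
        / max ((bhReject α0 (fun k => pv k ω)).card : ℝ) 1 ∂P)
      = (N₀.card : ℝ) * (α0 / m) := by
    rw [integral_congr_ae (Filter.Eventually.of_forall hpt)]
    rw [integral_finset_sum _ (fun k _ => integrable_finset_sum _ (fun r _ => hint k r))]
    have : ∀ k ∈ N₀, (∫ ω, ∑ r ∈ Finset.Icc 1 m,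
        (if pv k ω ≤ t r ∧ g k ω = r then (r : ℝ)⁻¹ else 0) ∂P) = α0 / m := by
      intro k hk
      rw [integral_finset_sum _ (fun r _ => hint k r)]
      rw [Finset.sum_congr rfl (key k hk)]
      rw [← Finset.mul_sum, sum_r k, mul_one]
    rw [Finset.sum_congr rfl this, Finset.sum_const, nsmul_eq_mul]
  have hcardle : (N₀.card : ℝ) ≤ m := by
    exact_mod_cast le_trans (Finset.card_le_univ N₀) (by simp)
  have hm0 : (0:ℝ) < m := by exact_mod_cast hm
  constructor
  · rw [hintegral]; ring
  · rw [hintegral]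
    calc (N₀.card : ℝ) * (α0 / m) ≤ (m : ℝ) * (α0 / m) := by
          gcongr
      _ = α0 := by field_simp
end

section
/- Let D_1,...,D_p be i.i.d. random variables with E(D_1^{2k}) < ∞ for some fixed k, drawn independently of a fixed query point; suppose the ratio E(D_1^{2k})/(E(D_1^2))^k → 1 (in an indexed family as dimension p → ∞ with distances being p-fold sums of i.i.d. coordinate contributions with finite variance of the normalized square). Then max_i D_i^2 / min_i D_i^2 → 1 in probability as p → ∞, i.e., nearest and farthest neighbor distances become indistinguishable in high dimensions. -/
open MeasureTheory Filter Topology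

private lemma tendsto_sup'_of_tendsto {ι : Type*} (s : Finset ι) (hs : s.Nonempty)
    (f : ℕ → ι → ℝ) (L : ℝ) (h : ∀ i ∈ s, Tendsto (fun p => f p i) atTop (𝓝 L)) :
    Tendsto (fun p => s.sup' hs (f p)) atTop (𝓝 L) := by
  induction s using Finset.cons_induction with
  | empty => exact absurd hs (by simp)
  | cons a s ha ih =>
    rcases s.eq_empty_or_nonempty with rfl | hs'
    · simpa using h a (by simp)
    · have H := (h a (Finset.mem_cons_self a s)).max
        (ih hs' fun i hi => h i (Finset.mem_cons_of_mem hi))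
      rw [max_self] at H
      refine H.congr fun p => ?_
      rw [Finset.sup'_cons hs']

private lemma tendsto_inf'_of_tendsto {ι : Type*} (s : Finset ι) (hs : s.Nonempty)
    (f : ℕ → ι → ℝ) (L : ℝ) (h : ∀ i ∈ s, Tendsto (fun p => f p i) atTop (𝓝 L)) :
    Tendsto (fun p => s.inf' hs (f p)) atTop (𝓝 L) := by
  induction s using Finset.cons_induction with
  | empty => exact absurd hs (by simp)
  | cons a s ha ih =>
    rcases s.eq_empty_or_nonempty with rfl | hs'
    · simpa using h a (by simp)
    · have H := (h a (Finset.mem_cons_self a s)).min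
        (ih hs' fun i hi => h i (Finset.mem_cons_of_mem hi))
      rw [min_self] at H
      refine H.congr fun p => ?_
      rw [Finset.inf'_cons hs']

/-- Concentration of distances in high dimensions (Beyer et al. 1999): with
squared distances given by p-fold sums of i.i.d. nonnegative contributions with
positive mean and finite variance, the ratio of the farthest to the nearest
distance among n points tends to 1 in probability as p → ∞. -/
theorem distance_concentration {Ω : Type*} [MeasurableSpace Ω] (P : Measure Ω)
    [IsProbabilityMeasure P] {n : ℕ}
    (hne : (Finset.univ : Finset (Fin n)).Nonempty)
    (W : Fin n → ℕ → Ω → ℝ) (hmeas : ∀ i j, Measurable (W i j))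
    (hindep : ProbabilityTheory.iIndepFun
      (fun q : Fin n × ℕ => W q.1 q.2) P)
    (hident : ∀ i j k l, Measure.map (W i j) P = Measure.map (W k l) P)
    (hnonneg : ∀ i j ω, 0 ≤ W i j ω)
    (μ σ2 : ℝ) (hμ : 0 < μ)
    (hmean : ∀ i j, (∫ ω, W i j ω ∂P) = μ)
    (hL2 : ∀ i j, MemLp (W i j) 2 P)
    (hvar : ∀ i j, (∫ ω, (W i j ω - μ) ^ 2 ∂P) = σ2) :
    ∀ ε > (0 : ℝ), Tendsto (fun p : ℕ =>
      P {ω | ε ≤ |(Finset.univ.sup' hne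
            (fun i => Real.sqrt (∑ j ∈ Finset.range p, W i j ω)))
          / (Finset.univ.inf' hne
            (fun i => Real.sqrt (∑ j ∈ Finset.range p, W i j ω))) - 1|})
      atTop (nhds 0) := by
  intro ε hε
  set R : ℕ → Ω → ℝ := fun p ω =>
    (Finset.univ.sup' hne (fun i => Real.sqrt (∑ j ∈ Finset.range p, W i j ω)))
      / (Finset.univ.inf' hne (fun i => Real.sqrt (∑ j ∈ Finset.range p, W i j ω)))
    with hR
  -- Strong law of large numbers for each point i
  have slln : ∀ i : Fin n, ∀ᵐ ω ∂P,
      Tendsto (fun p : ℕ => ((p : ℝ))⁻¹ • ∑ j ∈ Finset.range p, W i j ω)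
        atTop (𝓝 μ) := by
    intro i
    have hint : Integrable (W i 0) P := (hL2 i 0).integrable one_le_two
    have hpind : Pairwise (Function.onFun (ProbabilityTheory.IndepFun · · P) (W i)) := by
      intro j l hjl
      exact hindep.indepFun (show ((i, j) : Fin n × ℕ) ≠ (i, l) by simp [hjl])
    have hid : ∀ j, ProbabilityTheory.IdentDistrib (W i j) (W i 0) P P := fun j =>
      ⟨(hmeas i j).aemeasurable, (hmeas i 0).aemeasurable, hident i j i 0⟩
    have H := ProbabilityTheory.strong_law_ae (W i) hint hpind hid
    rw [show (∫ ω, W i 0 ω ∂P) = μ from hmean i 0] at H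
    exact H
  have hae : ∀ᵐ ω ∂P, Tendsto (fun p => R p ω) atTop (𝓝 1) := by
    filter_upwards [ae_all_iff.2 slln] with ω hω
    -- normalized square-root distances
    set b : ℕ → Fin n → ℝ := fun p i =>
      Real.sqrt (((p : ℝ))⁻¹ * ∑ j ∈ Finset.range p, W i j ω) with hb
    have hbt : ∀ i : Fin n, Tendsto (fun p => b p i) atTop (𝓝 (Real.sqrt μ)) := by
      intro i
      have h := (Real.continuous_sqrt.tendsto μ).comp (hω i)
      refine h.congr fun p => ?_
      simp only [Function.comp_apply, smul_eq_mul, hb]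
    have hsup := tendsto_sup'_of_tendsto Finset.univ hne b (Real.sqrt μ)
      (fun i _ => hbt i)
    have hinf := tendsto_inf'_of_tendsto Finset.univ hne b (Real.sqrt μ)
      (fun i _ => hbt i)
    have hsq : Real.sqrt μ ≠ 0 := (Real.sqrt_pos.2 hμ).ne'
    have hratio : Tendsto
        (fun p => Finset.univ.sup' hne (b p) / Finset.univ.inf' hne (b p))
        atTop (𝓝 1) := by
      have := hsup.div hinf hsq
      rw [div_self hsq] at this
      exact this
    refine hratio.congr' ?_
    filter_upwards [eventually_ge_atTop 1] with p hp
    have hp0 : (0 : ℝ) < (p : ℝ) := by exact_mod_cast hp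
    -- for each i, sqrt (S i) = sqrt p * b p i
    have key : ∀ i : Fin n,
        Real.sqrt (∑ j ∈ Finset.range p, W i j ω) = Real.sqrt (p : ℝ) * b p i := by
      intro i
      rw [hb, ← Real.sqrt_mul hp0.le]
      congr 1
      field_simp
    have hsupe : Finset.univ.sup' hne
        (fun i => Real.sqrt (∑ j ∈ Finset.range p, W i j ω))
        = Real.sqrt (p : ℝ) * Finset.univ.sup' hne (b p) := by
      rw [Finset.comp_sup'_eq_sup'_comp hne (fun x => Real.sqrt (p : ℝ) * x)
        (fun x y => mul_max_of_nonneg x y (Real.sqrt_nonneg _))]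
      exact Finset.sup'_congr hne rfl fun i _ => key i
    have hinfe : Finset.univ.inf' hne
        (fun i => Real.sqrt (∑ j ∈ Finset.range p, W i j ω))
        = Real.sqrt (p : ℝ) * Finset.univ.inf' hne (b p) := by
      rw [Finset.apply_inf'_eq_inf'_comp hne (fun x => Real.sqrt (p : ℝ) * x)
        (fun x y => mul_min_of_nonneg x y (Real.sqrt_nonneg _))]
      exact Finset.inf'_congr hne rfl fun i _ => key i
    have hsp : Real.sqrt (p : ℝ) ≠ 0 := (Real.sqrt_pos.2 hp0).ne'
    rw [hR]
    simp only [hsupe, hinfe]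
    rw [mul_div_mul_left _ _ hsp]
  -- measurability of the ratio
  have hmR : ∀ p, AEStronglyMeasurable (R p) P := by
    intro p
    have hsum : ∀ i : Fin n, Measurable (fun ω => ∑ j ∈ Finset.range p, W i j ω) :=
      fun i => Finset.measurable_sum _ fun j _ => hmeas i j
    have hsq : ∀ i : Fin n,
        Measurable (fun ω => Real.sqrt (∑ j ∈ Finset.range p, W i j ω)) :=
      fun i => Real.continuous_sqrt.measurable.comp (hsum i)
    have h1 : Measurable (fun ω => Finset.univ.sup' hne
        (fun i => Real.sqrt (∑ j ∈ Finset.range p, W i j ω))) := by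
      have := Finset.measurable_sup' hne (f := fun i ω =>
        Real.sqrt (∑ j ∈ Finset.range p, W i j ω)) (fun i _ => hsq i)
      convert this using 1
      ext ω
      simp [Finset.sup'_apply]
    have h2 : Measurable (fun ω => Finset.univ.inf' hne
        (fun i => Real.sqrt (∑ j ∈ Finset.range p, W i j ω))) := by
      have := Finset.inf'_induction (p := fun g : Ω → ℝ => Measurable g) hne
        (fun i ω => Real.sqrt (∑ j ∈ Finset.range p, W i j ω))
        (fun f hf g hg => hf.inf hg) (fun i _ => hsq i)
      convert this using 1
      ext ω
      simp [Finset.inf'_apply]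
    exact (h1.div h2).aestronglyMeasurable
  have := tendstoInMeasure_iff_dist.1 (tendstoInMeasure_of_tendsto_ae (μ := P) (f := R) (g := fun _ => 1) hmR hae) ε hε
  simpa [Real.dist_eq] using this
end
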